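/- Suppose A = dom(F) for a partially computable F, A has density 1, and A has no computable subset of density 1. Let V be universal and define U(x) = V(y) if x = y² and U(x) = F(x) otherwise. Then U is universal, dom(U) has density 1, and dom(U) is not almost decidable. -/

import Mathlib

open Filter

/-- The counting sequence #({1,...,N} ∩ A)/N used for natural density. -/
noncomputable def densSeq (A : Set ℕ) (N : ℕ) : ℝ :=
  (Nat.card ↥(A ∩ Set.Icc 1 N) : ℝ) / N

/-- `A` has natural density `r`. -/
def HasDensity (A : Set ℕ) (r : ℝ) : Prop :=
  Filter.Tendsto (densSeq A) Filter.atTop (nhds r)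

/-- `phi n` is the largest `k` such that `2^(k-1)` divides `n` (for `n ≥ 1`),
i.e. the 2-adic valuation of `n` plus one. -/
def phi (n : ℕ) : ℕ := padicValNat 2 n + 1

/-- A set of positive integers is almost decidable if some computable set of
natural density one intersects it in a computable set. -/
def AlmostDecidable (S : Set ℕ) : Prop :=
  ∃ R : Set ℕ, ComputablePred (· ∈ R) ∧ HasDensity R 1 ∧
    ComputablePred (fun x => x ∈ R ∧ x ∈ S)

/-- A (Turing) universal partially computable unary function. -/
def Universal (U : ℕ →. ℕ) : Prop :=
  Partrec U ∧ ∃ C : ℕ → ℕ → ℕ, Computable₂ C ∧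
    ∀ F : ℕ →. ℕ, Partrec F → ∃ g : ℕ, ∀ x, 1 ≤ x → U (C g x) = F x

lemma densSeq_eq (A : Set ℕ) (N : ℕ) :
    densSeq A N = ((A ∩ Set.Icc 1 N).ncard : ℝ) / N := by
  rw [densSeq, Nat.card_coe_set_eq]

lemma ncard_Icc' (a b : ℕ) : (Set.Icc a b).ncard = b + 1 - a := by
  rw [← Finset.coe_Icc, Set.ncard_coe_finset, Nat.card_Icc]

lemma sq_ncard_le (N : ℕ) :
    ({x : ℕ | Nat.sqrt x * Nat.sqrt x = x} ∩ Set.Icc 1 N).ncard ≤ Nat.sqrt N := by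
  have h : ({x : ℕ | Nat.sqrt x * Nat.sqrt x = x} ∩ Set.Icc 1 N).ncard
      ≤ (Set.Icc 1 (Nat.sqrt N)).ncard := by
    apply Set.ncard_le_ncard_of_injOn Nat.sqrt
    · rintro a ⟨ha, h1, h2⟩
      refine ⟨?_, Nat.sqrt_le_sqrt h2⟩
      rcases Nat.eq_zero_or_pos (Nat.sqrt a) with h | h
      · exfalso
        have ha' : Nat.sqrt a * Nat.sqrt a = a := ha
        rw [h] at ha'; omega
      · exact h
    · intro a ha b hb hab
      have ha' : Nat.sqrt a * Nat.sqrt a = a := ha.1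
      have hb' : Nat.sqrt b * Nat.sqrt b = b := hb.1
      rw [← ha', ← hb', hab]
  rw [ncard_Icc'] at h; omega

lemma nat_sqrt_tendsto : Tendsto Nat.sqrt atTop atTop := by
  apply tendsto_atTop_atTop.2
  intro b
  exact ⟨b * b, fun n hn => by simpa [Nat.sqrt_eq] using Nat.sqrt_le_sqrt hn⟩

lemma tendsto_sqrt_div : Tendsto (fun N : ℕ => (Nat.sqrt N : ℝ) / N) atTop (nhds 0) := by
  have h1 : Tendsto (fun N : ℕ => ((Nat.sqrt N : ℝ))⁻¹) atTop (nhds 0) :=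
    tendsto_inv_atTop_zero.comp (tendsto_natCast_atTop_atTop.comp nat_sqrt_tendsto)
  apply tendsto_of_tendsto_of_tendsto_of_le_of_le' tendsto_const_nhds h1
  · filter_upwards with N
    positivity
  · filter_upwards [eventually_ge_atTop 1] with N hN
    have hs : 1 ≤ Nat.sqrt N := by
      have := Nat.sqrt_le_sqrt hN; simpa using this
    have hsr : (1:ℝ) ≤ (Nat.sqrt N : ℝ) := by exact_mod_cast hs
    have hmul : (Nat.sqrt N : ℝ) * (Nat.sqrt N : ℝ) ≤ (N : ℝ) := by
      exact_mod_cast Nat.sqrt_le N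
    calc (Nat.sqrt N : ℝ) / N ≤ (Nat.sqrt N : ℝ) / ((Nat.sqrt N : ℝ) * (Nat.sqrt N : ℝ)) := by
          apply div_le_div_of_nonneg_left (by linarith) (by nlinarith) hmul
      _ = ((Nat.sqrt N : ℝ))⁻¹ := by
          field_simp

lemma densSeq_le_add {X Y S : Set ℕ} (hS : ∀ N, (S ∩ Set.Icc 1 N).ncard ≤ Nat.sqrt N)
    (hXY : X ⊆ Y ∪ S) (N : ℕ) :
    densSeq X N ≤ densSeq Y N + (Nat.sqrt N : ℝ) / N := by
  rcases Nat.eq_zero_or_pos N with rfl | hN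
  · simp [densSeq_eq]
  have hc : (X ∩ Set.Icc 1 N).ncard ≤ (Y ∩ Set.Icc 1 N).ncard + (S ∩ Set.Icc 1 N).ncard := by
    calc (X ∩ Set.Icc 1 N).ncard
        ≤ ((Y ∩ Set.Icc 1 N) ∪ (S ∩ Set.Icc 1 N)).ncard := by
          apply Set.ncard_le_ncard
          · rintro x ⟨hx, hI⟩
            rcases hXY hx with h | h
            exacts [Or.inl ⟨h, hI⟩, Or.inr ⟨h, hI⟩]
          · exact (((Set.finite_Icc 1 N).inter_of_right _).union
              ((Set.finite_Icc 1 N).inter_of_right _))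
      _ ≤ _ := Set.ncard_union_le _ _
  have hc2 : ((X ∩ Set.Icc 1 N).ncard : ℝ)
      ≤ ((Y ∩ Set.Icc 1 N).ncard : ℝ) + (Nat.sqrt N : ℝ) := by
    have := hS N
    exact_mod_cast le_trans hc (by omega)
  rw [densSeq_eq, densSeq_eq, ← add_div]
  apply div_le_div_of_nonneg_right hc2 ?_ |>.trans_eq rfl
  positivity

lemma dens_sandwich {A B S : Set ℕ} (hS : ∀ N, (S ∩ Set.Icc 1 N).ncard ≤ Nat.sqrt N)
    (h1 : A ⊆ B ∪ S) (h2 : B ⊆ A ∪ S) (hA : HasDensity A 1) : HasDensity B 1 := by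
  have hup : ∀ N, densSeq B N ≤ densSeq A N + (Nat.sqrt N : ℝ) / N :=
    densSeq_le_add hS h2
  have hlo : ∀ N, densSeq A N - (Nat.sqrt N : ℝ) / N ≤ densSeq B N := fun N => by
    have := densSeq_le_add hS h1 N; linarith
  have t1 : Tendsto (fun N => densSeq A N - (Nat.sqrt N : ℝ) / N) atTop (nhds 1) := by
    simpa using hA.sub tendsto_sqrt_div
  have t2 : Tendsto (fun N => densSeq A N + (Nat.sqrt N : ℝ) / N) atTop (nhds 1) := by
    simpa using hA.add tendsto_sqrt_div
  exact tendsto_of_tendsto_of_tendsto_of_le_of_le t1 t2 hlo hup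

lemma dens_inter {A B : Set ℕ} (hA : HasDensity A 1) (hB : HasDensity B 1) :
    HasDensity (A ∩ B) 1 := by
  have hup : ∀ N, densSeq (A ∩ B) N ≤ densSeq A N := fun N => by
    rw [densSeq_eq, densSeq_eq]
    apply div_le_div_of_nonneg_right ?_ (by positivity) |>.trans_eq rfl
    have hsub : (A ∩ B) ∩ Set.Icc 1 N ⊆ A ∩ Set.Icc 1 N := fun x hx => ⟨hx.1.1, hx.2⟩
    exact_mod_cast Set.ncard_le_ncard hsub ((Set.finite_Icc 1 N).inter_of_right _)
  have hlo : ∀ N, 1 ≤ N → densSeq A N + densSeq B N - 1 ≤ densSeq (A ∩ B) N := by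
    intro N hN
    have key : (A ∩ Set.Icc 1 N).ncard + (B ∩ Set.Icc 1 N).ncard
        ≤ ((A ∩ B) ∩ Set.Icc 1 N).ncard + N := by
      have hu := Set.ncard_union_add_ncard_inter (A ∩ Set.Icc 1 N) (B ∩ Set.Icc 1 N)
        ((Set.finite_Icc 1 N).inter_of_right _) ((Set.finite_Icc 1 N).inter_of_right _)
      have h1 : ((A ∩ Set.Icc 1 N) ∪ (B ∩ Set.Icc 1 N)).ncard ≤ N := by
        have := Set.ncard_le_ncard (show (A ∩ Set.Icc 1 N) ∪ (B ∩ Set.Icc 1 N) ⊆ Set.Icc 1 N by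
          rintro x (⟨_, h⟩ | ⟨_, h⟩) <;> exact h) (Set.finite_Icc 1 N)
        rw [ncard_Icc'] at this; omega
      have h2 : (A ∩ Set.Icc 1 N) ∩ (B ∩ Set.Icc 1 N) = (A ∩ B) ∩ Set.Icc 1 N := by
        ext x; constructor
        · rintro ⟨⟨ha, hI⟩, hb, _⟩; exact ⟨⟨ha, hb⟩, hI⟩
        · rintro ⟨⟨ha, hb⟩, hI⟩; exact ⟨⟨ha, hI⟩, hb, hI⟩
      rw [h2] at hu; omega
    have hNpos : (0:ℝ) < N := by exact_mod_cast hN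
    rw [densSeq_eq, densSeq_eq, densSeq_eq]
    rw [← add_div]
    have heq : (((A ∩ Set.Icc 1 N).ncard : ℝ) + (B ∩ Set.Icc 1 N).ncard) / N - 1
        = (((A ∩ Set.Icc 1 N).ncard : ℝ) + (B ∩ Set.Icc 1 N).ncard - N) / N := by
      field_simp
    rw [heq]
    apply div_le_div_of_nonneg_right ?_ hNpos.le
    have : ((A ∩ Set.Icc 1 N).ncard : ℝ) + (B ∩ Set.Icc 1 N).ncard
        ≤ ((A ∩ B) ∩ Set.Icc 1 N).ncard + N := by exact_mod_cast key
    linarith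
  have t1 : Tendsto (fun N => densSeq A N + densSeq B N - 1) atTop (nhds 1) := by
    have := (hA.add hB).sub (tendsto_const_nhds (x := (1:ℝ)))
    simpa using this
  apply tendsto_of_tendsto_of_tendsto_of_le_of_le' t1 hA
  · filter_upwards [eventually_ge_atTop 1] with N hN using hlo N hN
  · filter_upwards with N using hup N

lemma compPred_and {p q : ℕ → Prop} (hp : ComputablePred p) (hq : ComputablePred q) :
    ComputablePred fun x => p x ∧ q x := by
  obtain ⟨f, hf, rfl⟩ := ComputablePred.computable_iff.1 hp
  obtain ⟨g, hg, rfl⟩ := ComputablePred.computable_iff.1 hq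
  refine ComputablePred.computable_iff.2 ⟨fun x => f x && g x, ?_, ?_⟩
  · exact (Computable.cond hf hg (Computable.const false)).of_eq fun x => by cases f x <;> rfl
  · funext x; simp [Bool.and_eq_true]

lemma compPred_sq : ComputablePred fun x : ℕ => Nat.sqrt x * Nat.sqrt x = x := by
  refine ComputablePred.computable_iff.2
    ⟨fun x => decide (Nat.sqrt x * Nat.sqrt x = x), ?_, ?_⟩
  · exact Primrec.to_comp
      (Primrec.eq.comp (Primrec.nat_mul.comp Primrec.nat_sqrt Primrec.nat_sqrt) Primrec.id).decide
  · funext x; simp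

lemma compC2 {C : ℕ → ℕ → ℕ} (hC : Computable₂ C) :
    Computable₂ fun g x => C g x * C g x :=
  Primrec.nat_mul.to_comp.comp hC hC

theorem stmt_12 (F : ℕ →. ℕ) (hF : Partrec F)
    (A : Set ℕ) (hA : A = {x : ℕ | 1 ≤ x ∧ (F x).Dom})
    (hAdens : HasDensity A 1)
    (hAnosub : ¬ ∃ R : Set ℕ, ComputablePred (· ∈ R) ∧ HasDensity R 1 ∧ R ⊆ A)
    (V : ℕ →. ℕ) (hV : Universal V) (U : ℕ →. ℕ)
    (hU : ∀ x : ℕ, U x =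
      if Nat.sqrt x * Nat.sqrt x = x then V (Nat.sqrt x) else F x) :
    Universal U ∧ HasDensity {x : ℕ | 1 ≤ x ∧ (U x).Dom} 1 ∧
    ¬ AlmostDecidable {x : ℕ | (U x).Dom} := by
  obtain ⟨hVpart, CV, hCV, hCuniv⟩ := hV
  -- U is partial recursive
  have hsqb : Computable fun x : ℕ => decide (Nat.sqrt x * Nat.sqrt x = x) :=
    Primrec.to_comp
      (Primrec.eq.comp (Primrec.nat_mul.comp Primrec.nat_sqrt Primrec.nat_sqrt) Primrec.id).decide
  have hUpart : Partrec U := by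
    have : Partrec fun x : ℕ =>
        cond (decide (Nat.sqrt x * Nat.sqrt x = x)) (V (Nat.sqrt x)) (F x) :=
      Partrec.cond hsqb (hVpart.comp Primrec.nat_sqrt.to_comp) hF
    refine this.of_eq fun x => ?_
    rw [hU x]
    by_cases h : Nat.sqrt x * Nat.sqrt x = x <;> simp [h]
  -- Universality of U
  have hUuniv : Universal U := by
    refine ⟨hUpart, fun g x => CV g x * CV g x, compC2 hCV, ?_⟩
    intro F' hF'
    obtain ⟨g, hg⟩ := hCuniv F' hF'
    refine ⟨g, fun x hx => ?_⟩
    rw [hU, if_pos (by rw [Nat.sqrt_eq]), Nat.sqrt_eq]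
    exact hg x hx
  -- domain comparison with A
  set SqS : Set ℕ := {x : ℕ | Nat.sqrt x * Nat.sqrt x = x} with hSqS
  set D : Set ℕ := {x : ℕ | 1 ≤ x ∧ (U x).Dom} with hD
  have h1 : A ⊆ D ∪ SqS := by
    intro x hx
    rw [hA] at hx
    by_cases h : Nat.sqrt x * Nat.sqrt x = x
    · exact Or.inr h
    · refine Or.inl ⟨hx.1, ?_⟩
      rw [hU x, if_neg h]
      exact hx.2
  have h2 : D ⊆ A ∪ SqS := by
    intro x hx
    by_cases h : Nat.sqrt x * Nat.sqrt x = x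
    · exact Or.inr h
    · refine Or.inl ?_
      rw [hA]
      refine ⟨hx.1, ?_⟩
      have := hx.2
      rwa [hU x, if_neg h] at this
  have hDdens : HasDensity D 1 := dens_sandwich sq_ncard_le h1 h2 hAdens
  refine ⟨hUuniv, hDdens, ?_⟩
  -- not almost decidable
  rintro ⟨R, hRcomp, hRdens, hRScomp⟩
  set S : Set ℕ := {x : ℕ | (U x).Dom} with hS
  have hSdens : HasDensity S 1 := by
    have hset : ∀ N, S ∩ Set.Icc 1 N = D ∩ Set.Icc 1 N := by
      intro N; ext x
      constructor
      · rintro ⟨hs, hI⟩; exact ⟨⟨hI.1, hs⟩, hI⟩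
      · rintro ⟨hd, hI⟩; exact ⟨hd.2, hI⟩
    have : densSeq S = densSeq D := by
      funext N; unfold densSeq; rw [hset N]
    unfold HasDensity; rw [this]; exact hDdens
  have hRSdens : HasDensity (R ∩ S) 1 := dens_inter hRdens hSdens
  set R' : Set ℕ := {x : ℕ | (x ∈ R ∧ x ∈ S) ∧ ¬(Nat.sqrt x * Nat.sqrt x = x)} with hR'
  have hR'comp : ComputablePred (· ∈ R') :=
    compPred_and hRScomp compPred_sq.not
  have hR'dens : HasDensity R' 1 := by
    apply dens_sandwich sq_ncard_le (A := R ∩ S) (S := SqS) ?_ ?_ hRSdens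
    · intro x hx
      by_cases h : Nat.sqrt x * Nat.sqrt x = x
      · exact Or.inr h
      · exact Or.inl ⟨⟨hx.1, hx.2⟩, h⟩
    · rintro x ⟨⟨h1x, h2x⟩, _⟩; exact Or.inl ⟨h1x, h2x⟩
  have hR'sub : R' ⊆ A := by
    rintro x ⟨⟨hxR, hxS⟩, hnsq⟩
    rw [hA]
    have hx1 : 1 ≤ x := by
      by_contra h
      exact hnsq (by have hx0 : x = 0 := by omega
                     simp [hx0])
    refine ⟨hx1, ?_⟩
    have := hxS
    rwa [hS, Set.mem_setOf_eq, hU x, if_neg hnsq] at this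
  exact hAnosub ⟨R', hR'comp, hR'dens, hR'sub⟩
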